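/- Let T be a finite combinatorial tree, α ∈ [1/2, 1), and {i,j} an edge. Then W₁(m_i^α, m_j^α) = 1 + (1−α)·( (deg(i)−2)/deg(i) + (deg(j)−2)/deg(j) ), where m_x^α is the α-lazy random walk measure at x. -/

import Mathlib

open SimpleGraph

section Helpers
variable {V : Type*} {G : SimpleGraph V}

lemma tree_bridge (hT : G.IsTree) {i j : V} (hadj : G.Adj i j) (p : G.Walk i j) :
    s(i,j) ∈ p.edges :=
  ((SimpleGraph.isBridge_iff_adj_and_forall_walk_mem_edges.mp
    ((SimpleGraph.isAcyclic_iff_forall_adj_isBridge.mp hT.2) hadj))) p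

lemma not_adj_aux (hT : G.IsTree) {i j l : V} (hadj : G.Adj i j)
    (hl : G.Adj j l) (hli : l ≠ i) : ¬ G.Adj i l := by
  intro hil
  have h := tree_bridge hT hadj (Walk.cons hil (Walk.cons hl.symm Walk.nil))
  simp only [Walk.edges_cons, Walk.edges_nil, List.mem_cons, List.not_mem_nil, or_false,
    Sym2.eq_iff] at h
  rcases h with (⟨h1,h2⟩|⟨h1,h2⟩)|(⟨h1,h2⟩|⟨h1,h2⟩) <;> subst_vars <;> simp_all

lemma two_le_dist (hT : G.IsTree) {x y : V} (hne : x ≠ y) (hnadj : ¬ G.Adj x y) :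
    2 ≤ G.dist x y := by
  have h0 : G.dist x y ≠ 0 := by
    rw [SimpleGraph.dist_ne_zero_iff_ne_and_reachable]
    exact ⟨hne, hT.1.preconnected x y⟩
  have h1 : G.dist x y ≠ 1 := fun h => hnadj (SimpleGraph.dist_eq_one_iff_adj.mp h)
  omega

lemma dist_two_aux (hT : G.IsTree) {i j b : V} (hadj : G.Adj i j)
    (hb : G.Adj i b) (hbj : b ≠ j) : G.dist j b = 2 := by
  have hle : G.dist j b ≤ 2 := by
    have := SimpleGraph.dist_le (Walk.cons hadj.symm (Walk.cons hb Walk.nil))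
    simpa using this
  have hge : 2 ≤ G.dist j b :=
    two_le_dist hT (fun h => hbj h.symm) (fun h => not_adj_aux hT hadj.symm hb hbj h)
  omega

lemma dist_three [DecidableEq V] (hT : G.IsTree) {i j k l : V} (hadj : G.Adj i j)
    (hk : G.Adj i k) (hkj : k ≠ j) (hl : G.Adj j l) (hli : l ≠ i) :
    3 ≤ G.dist k l := by
  have hnadj_il : ¬ G.Adj i l := not_adj_aux hT hadj hl hli
  have hkl : k ≠ l := by
    rintro rfl
    have h := tree_bridge hT hadj (Walk.cons hk (Walk.cons hl.symm Walk.nil))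
    simp only [Walk.edges_cons, Walk.edges_nil, List.mem_cons, List.not_mem_nil, or_false,
      Sym2.eq_iff] at h
    rcases h with (⟨h1,h2⟩|⟨h1,h2⟩)|(⟨h1,h2⟩|⟨h1,h2⟩) <;> subst_vars <;> simp_all
  have hd0 : G.dist k l ≠ 0 := by
    rw [SimpleGraph.dist_ne_zero_iff_ne_and_reachable]
    exact ⟨hkl, hT.1.preconnected k l⟩
  obtain ⟨w, hw⟩ := SimpleGraph.exists_walk_of_dist_ne_zero hd0
  rw [← hw]
  have hmem := tree_bridge hT hadj ((Walk.cons hk w).append (Walk.cons hl.symm Walk.nil))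
  rw [Walk.edges_append] at hmem
  simp only [Walk.edges_cons, Walk.edges_nil, List.mem_append, List.mem_cons,
    List.not_mem_nil, or_false, Sym2.eq_iff] at hmem
  rcases hmem with (((⟨h1,h2⟩|⟨h1,h2⟩) | hmem) | (⟨h1,h2⟩|⟨h1,h2⟩))
  · exact absurd h2.symm hkj
  · exact absurd h1 hk.ne
  · have hi : i ∈ w.support := w.fst_mem_support_of_mem_edges hmem
    have hsplit := w.take_spec hi
    have hlen : (w.takeUntil i hi).length + (w.dropUntil i hi).length = w.length := by
      rw [← Walk.length_append, hsplit]
    have h1 : G.dist k i ≤ (w.takeUntil i hi).length := SimpleGraph.dist_le _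
    have h2 : G.dist i l ≤ (w.dropUntil i hi).length := SimpleGraph.dist_le _
    have hki : 1 ≤ G.dist k i := by
      have : G.dist k i ≠ 0 := by
        rw [SimpleGraph.dist_ne_zero_iff_ne_and_reachable]
        exact ⟨hk.ne', hT.1.preconnected k i⟩
      omega
    have hil2 : 2 ≤ G.dist i l := two_le_dist hT (fun h => hli h.symm) hnadj_il
    omega
  · exact absurd h1.symm hli
  · exact absurd h1 hadj.ne
end Helpers

section SumHelpers
variable {V : Type*} [Fintype V] [DecidableEq V] (G : SimpleGraph V) [DecidableRel G.Adj]

lemma sum_ind {x y : V} (hxy : G.Adj x y) (c : ℝ) :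
    ∑ a : V, (if G.Adj x a ∧ a ≠ y then c else 0) = ((G.degree x : ℝ) - 1) * c := by
  have hfil : Finset.univ.filter (fun a => G.Adj x a ∧ a ≠ y) = (G.neighborFinset x).erase y := by
    ext a
    simp [Finset.mem_erase, SimpleGraph.mem_neighborFinset, and_comm]
  rw [← Finset.sum_filter, hfil, Finset.sum_const,
    Finset.card_erase_of_mem (by simpa using hxy), nsmul_eq_mul]
  have h1 : 1 ≤ (G.neighborFinset x).card :=
    Finset.card_pos.mpr ⟨y, by simpa using hxy⟩
  rw [Nat.cast_sub h1]
  rw [SimpleGraph.card_neighborFinset_eq_degree]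
  push_cast
  ring
end SumHelpers

/-- 1-Wasserstein distance on a graph w.r.t. the shortest path metric. -/
noncomputable def W1 {V : Type*} [Fintype V] (G : SimpleGraph V) (μ ν : V → ℝ) : ℝ :=
  sInf { c : ℝ | ∃ π : V → V → ℝ, (∀ i j, 0 ≤ π i j) ∧
    (∀ j, ∑ i, π i j = μ j) ∧ (∀ i, ∑ j, π i j = ν i) ∧
    c = ∑ i, ∑ j, π i j * (G.dist i j : ℝ) }

/-- The α-lazy random walk measure at `x`. -/
noncomputable def lazy {V : Type*} [Fintype V] [DecidableEq V] (G : SimpleGraph V)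
    [DecidableRel G.Adj] (α : ℝ) (x : V) : V → ℝ :=
  fun y => if y = x then α else if G.Adj x y then (1 - α) / (G.degree x : ℝ) else 0

theorem stmt_10 {V : Type*} [Fintype V] [DecidableEq V] (G : SimpleGraph V)
    [DecidableRel G.Adj] (hT : G.IsTree) (α : ℝ) (hα : α ∈ Set.Ico (1/2 : ℝ) 1)
    (i j : V) (hadj : G.Adj i j) :
    W1 G (lazy G α i) (lazy G α j) =
      1 + (1 - α) *
        (((G.degree i : ℝ) - 2) / (G.degree i : ℝ) +
         ((G.degree j : ℝ) - 2) / (G.degree j : ℝ)) := by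
  obtain ⟨hα1, hα2⟩ := hα
  have hIJ : i ≠ j := hadj.ne
  have hJI : j ≠ i := hadj.ne'
  have hdi1 : 1 ≤ G.degree i := Finset.card_pos.mpr ⟨j, by simpa using hadj⟩
  have hdj1 : 1 ≤ G.degree j := Finset.card_pos.mpr ⟨i, by simpa using hadj.symm⟩
  have hdi0 : (G.degree i : ℝ) ≠ 0 := Nat.cast_ne_zero.mpr (by omega)
  have hdj0 : (G.degree j : ℝ) ≠ 0 := Nat.cast_ne_zero.mpr (by omega)
  have hdip : (0:ℝ) < (G.degree i : ℝ) := by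
    have : 0 < G.degree i := by omega
    exact_mod_cast this
  have hdjp : (0:ℝ) < (G.degree j : ℝ) := by
    have : 0 < G.degree j := by omega
    exact_mod_cast this
  have hcinn : (0:ℝ) ≤ (1 - α) / (G.degree i : ℝ) := div_nonneg (by linarith) hdip.le
  have hcjnn : (0:ℝ) ≤ (1 - α) / (G.degree j : ℝ) := div_nonneg (by linarith) hdjp.le
  have hDi : (G.degree i : ℝ) * ((1 - α) / (G.degree i : ℝ)) = 1 - α := by field_simp
  have hDj : (G.degree j : ℝ) * ((1 - α) / (G.degree j : ℝ)) = 1 - α := by field_simp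
  have hdJb : ∀ b, G.Adj i b → b ≠ j → G.dist j b = 2 := fun b hb hbj => dist_two_aux hT hadj hb hbj
  have hdAi : ∀ a, G.Adj j a → a ≠ i → G.dist a i = 2 := fun a ha hai => by
    rw [SimpleGraph.dist_comm]; exact dist_two_aux hT hadj.symm ha hai
  -- the coupling
  set π : V → V → ℝ := fun a b =>
    if a = i ∧ b = i then (1 - α) / (G.degree j : ℝ)
    else if a = j ∧ b = j then (1 - α) / (G.degree i : ℝ)
    else if a = j ∧ b = i then 2*α - 1
    else if a = j ∧ G.Adj i b then (1 - α) / (G.degree i : ℝ)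
    else if b = i ∧ G.Adj j a then (1 - α) / (G.degree j : ℝ)
    else 0 with hπdef
  have hπnn : ∀ a b, 0 ≤ π a b := by
    intro a b
    simp only [hπdef]
    split_ifs <;> first | linarith | exact hcinn | exact hcjnn
  -- pointwise values of π
  have hptI : ∀ a : V, π a i = (if a = i then (1 - α) / (G.degree j : ℝ) else 0)
      + (if a = j then 2*α - 1 else 0)
      + (if G.Adj j a ∧ a ≠ i then (1 - α) / (G.degree j : ℝ) else 0) := by
    intro a
    by_cases h1 : a = i
    · rw [h1]; simp [hπdef, hJI, hIJ]
    · by_cases h2 : a = j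
      · rw [h2]; simp [hπdef, hJI, hIJ]
      · simp [hπdef, h1, h2]
  have hptJ : ∀ a : V, π a j = (if a = j then (1 - α) / (G.degree i : ℝ) else 0) := by
    intro a
    by_cases h2 : a = j
    · rw [h2]; simp [hπdef, hIJ, hJI]
    · simp [hπdef, h2, hIJ, hJI]
  have hptO : ∀ b : V, b ≠ i → b ≠ j → ∀ a : V,
      π a b = (if a = j then (if G.Adj i b then (1 - α) / (G.degree i : ℝ) else 0) else 0) := by
    intro b hbi hbj a
    by_cases h2 : a = j
    · rw [h2]; simp [hπdef, hbi, hbj, hJI]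
    · simp [hπdef, h2, hbi]
  have hrowI : ∀ b : V, π i b = (if b = i then (1 - α) / (G.degree j : ℝ) else 0) := by
    intro b
    by_cases hb : b = i
    · rw [hb]; simp [hπdef]
    · simp [hπdef, hb, hIJ, hJI]
  have hrowJ : ∀ b : V, π j b = (if b = j then (1 - α) / (G.degree i : ℝ) else 0)
      + (if b = i then 2*α - 1 else 0)
      + (if G.Adj i b ∧ b ≠ j then (1 - α) / (G.degree i : ℝ) else 0) := by
    intro b
    by_cases hb1 : b = j
    · rw [hb1]; simp [hπdef, hJI, hIJ]
    · by_cases hb2 : b = i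
      · rw [hb2]; simp [hπdef, hJI, hIJ]
      · simp [hπdef, hb1, hb2, hJI]
  have hrowO : ∀ a : V, a ≠ i → a ≠ j → ∀ b : V,
      π a b = (if b = i then (if G.Adj j a then (1 - α) / (G.degree j : ℝ) else 0) else 0) := by
    intro a h1 h2 b
    by_cases hb : b = i
    · rw [hb]; simp [hπdef, h1, h2]
    · simp [hπdef, h1, h2, hb]
  -- column sums
  have hcol : ∀ b, ∑ a, π a b = lazy G α i b := by
    intro b
    by_cases hbi : b = i
    · rw [hbi]
      rw [Finset.sum_congr rfl (fun a _ => hptI a)]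
      rw [Finset.sum_add_distrib, Finset.sum_add_distrib, sum_ind G hadj.symm]
      simp only [Finset.sum_ite_eq', Finset.mem_univ, if_true]
      have hl : lazy G α i i = α := by simp [lazy]
      rw [hl]
      linear_combination hDj
    · by_cases hbj : b = j
      · rw [hbj]
        rw [Finset.sum_congr rfl (fun a _ => hptJ a)]
        simp only [Finset.sum_ite_eq', Finset.mem_univ, if_true]
        simp [lazy, hJI, hadj]
      · rw [Finset.sum_congr rfl (fun a _ => hptO b hbi hbj a)]
        simp only [Finset.sum_ite_eq', Finset.mem_univ, if_true]
        simp [lazy, hbi]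
  -- row sums
  have hrow : ∀ a, ∑ b, π a b = lazy G α j a := by
    intro a
    by_cases h1 : a = i
    · rw [h1]
      rw [Finset.sum_congr rfl (fun b _ => hrowI b)]
      simp only [Finset.sum_ite_eq', Finset.mem_univ, if_true]
      simp [lazy, hIJ, hadj.symm]
    · by_cases h2 : a = j
      · rw [h2]
        rw [Finset.sum_congr rfl (fun b _ => hrowJ b)]
        rw [Finset.sum_add_distrib, Finset.sum_add_distrib, sum_ind G hadj]
        simp only [Finset.sum_ite_eq', Finset.mem_univ, if_true]
        have hl : lazy G α j j = α := by simp [lazy]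
        rw [hl]
        linear_combination hDi
      · rw [Finset.sum_congr rfl (fun b _ => hrowO a h1 h2 b)]
        simp only [Finset.sum_ite_eq', Finset.mem_univ, if_true]
        simp [lazy, h2]
  -- cost of the coupling
  have hcost : ∑ a, ∑ b, π a b * (G.dist a b : ℝ) =
      (2*α - 1) + ((G.degree i : ℝ) - 1) * (2 * ((1 - α) / (G.degree i : ℝ)))
        + ((G.degree j : ℝ) - 1) * (2 * ((1 - α) / (G.degree j : ℝ))) := by
    have hinner : ∀ a, ∑ b, π a b * (G.dist a b : ℝ) =
        (if a = j then (2*α - 1) + ((G.degree i : ℝ) - 1) * (2 * ((1 - α) / (G.degree i : ℝ))) else 0)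
          + (if G.Adj j a ∧ a ≠ i then 2 * ((1 - α) / (G.degree j : ℝ)) else 0) := by
      intro a
      by_cases h1 : a = i
      · rw [h1]
        have hz : ∀ b, π i b * (G.dist i b : ℝ) = 0 := by
          intro b
          rw [hrowI b]
          by_cases hb : b = i
          · rw [hb]; simp
          · simp [hb]
        rw [Finset.sum_congr rfl (fun b _ => hz b)]
        simp [hIJ]
      · by_cases h2 : a = j
        · rw [h2]
          have hpt : ∀ b, π j b * (G.dist j b : ℝ) = (if b = i then 2*α - 1 else 0)
              + (if G.Adj i b ∧ b ≠ j then 2 * ((1 - α) / (G.degree i : ℝ)) else 0) := by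
            intro b
            rw [hrowJ b]
            by_cases hb1 : b = i
            · rw [hb1]
              have e2 : (G.dist j i : ℝ) = 1 := by
                exact_mod_cast SimpleGraph.dist_eq_one_iff_adj.mpr hadj.symm
              rw [e2]
              simp [hIJ, hJI, fun h : G.Adj i i => (G.irrefl h)]
            · by_cases hb2 : b = j
              · rw [hb2]; simp [hJI]
              · by_cases hb3 : G.Adj i b
                · have e2 : (G.dist j b : ℝ) = 2 := by exact_mod_cast hdJb b hb3 hb2
                  rw [e2]
                  simp [hb1, hb2, hb3]
                  ring
                · simp [hb1, hb2, hb3]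
          rw [Finset.sum_congr rfl (fun b _ => hpt b)]
          rw [Finset.sum_add_distrib, sum_ind G hadj]
          simp only [Finset.sum_ite_eq', Finset.mem_univ, if_true]
          simp [fun h : G.Adj j j => (G.irrefl h)]
        · have hpt : ∀ b, π a b * (G.dist a b : ℝ) =
              (if b = i then (if G.Adj j a then 2 * ((1 - α) / (G.degree j : ℝ)) else 0) else 0) := by
            intro b
            rw [hrowO a h1 h2 b]
            by_cases hb : b = i
            · rw [hb]
              by_cases hja : G.Adj j a
              · have e2 : (G.dist a i : ℝ) = 2 := by exact_mod_cast hdAi a hja h1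
                rw [e2]
                simp [hja]
                ring
              · simp [hja]
            · simp [hb]
          rw [Finset.sum_congr rfl (fun b _ => hpt b)]
          simp only [Finset.sum_ite_eq', Finset.mem_univ, if_true]
          simp [h1, h2]
    rw [Finset.sum_congr rfl (fun a _ => hinner a)]
    rw [Finset.sum_add_distrib, sum_ind G hadj.symm]
    simp only [Finset.sum_ite_eq', Finset.mem_univ, if_true]
  -- the potential function
  set f : V → ℝ := fun x =>
    if x = i then 1 else if x = j then 0 else if G.Adj i x then 2
    else if G.Adj j x then -1 else 0 with hfdef
  have hf_i : f i = 1 := by simp [hfdef]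
  have hf_j : f j = 0 := by simp [hfdef, hJI]
  have hf_k : ∀ b, G.Adj i b → b ≠ j → f b = 2 := by
    intro b hb hbj; simp [hfdef, hb.ne', hbj, hb]
  have hf_l : ∀ a, G.Adj j a → a ≠ i → f a = -1 := by
    intro a ha hai
    have hna : ¬ G.Adj i a := not_adj_aux hT hadj ha hai
    simp [hfdef, hai, ha.ne', hna, ha]
  have hfbd : ∀ a b, (b = i ∨ G.Adj i b) → (a = j ∨ G.Adj j a) →
      f b - f a ≤ (G.dist a b : ℝ) := by
    intro a b hb ha
    rcases hb with hb | hb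
    · rw [hb, hf_i]
      rcases ha with ha | ha
      · rw [ha, hf_j]
        have e : (G.dist j i : ℝ) = 1 := by
          exact_mod_cast SimpleGraph.dist_eq_one_iff_adj.mpr hadj.symm
        rw [e]; norm_num
      · by_cases hai : a = i
        · rw [hai, hf_i]; simp
        · rw [hf_l a ha hai]
          have e : (G.dist a i : ℝ) = 2 := by exact_mod_cast hdAi a ha hai
          rw [e]; norm_num
    · by_cases hbj : b = j
      · rw [hbj, hf_j]
        rcases ha with ha | ha
        · rw [ha, hf_j]; simp
        · by_cases hai : a = i
          · rw [hai, hf_i]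
            have : (0:ℝ) ≤ (G.dist i j : ℝ) := Nat.cast_nonneg _
            linarith
          · rw [hf_l a ha hai]
            have e : (G.dist a j : ℝ) = 1 := by
              exact_mod_cast SimpleGraph.dist_eq_one_iff_adj.mpr ha.symm
            rw [e]; norm_num
      · rw [hf_k b hb hbj]
        rcases ha with ha | ha
        · rw [ha, hf_j]
          have e : (G.dist j b : ℝ) = 2 := by exact_mod_cast hdJb b hb hbj
          rw [e]; norm_num
        · by_cases hai : a = i
          · rw [hai, hf_i]
            have e : (G.dist i b : ℝ) = 1 := by
              exact_mod_cast SimpleGraph.dist_eq_one_iff_adj.mpr hb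
            rw [e]; norm_num
          · rw [hf_l a ha hai]
            have h3 : 3 ≤ G.dist b a := dist_three hT hadj hb hbj ha hai
            have e : (3:ℝ) ≤ (G.dist a b : ℝ) := by
              rw [SimpleGraph.dist_comm]; exact_mod_cast h3
            linarith
  -- potential sums
  have e1 : ∑ b, lazy G α i b * f b
      = α + ((G.degree i : ℝ) - 1) * (2 * ((1 - α) / (G.degree i : ℝ))) := by
    have hpt : ∀ b, lazy G α i b * f b = (if b = i then α else 0)
        + (if G.Adj i b ∧ b ≠ j then 2 * ((1 - α) / (G.degree i : ℝ)) else 0) := by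
      intro b
      by_cases hb : b = i
      · rw [hb, hf_i]
        simp [lazy, fun h : G.Adj i i => (G.irrefl h)]
      · by_cases hb2 : b = j
        · rw [hb2, hf_j]
          simp [lazy, hJI, hadj]
        · by_cases hb3 : G.Adj i b
          · rw [hf_k b hb3 hb2]
            simp [lazy, hb, hb2, hb3]
            ring
          · have hz : lazy G α i b = 0 := by simp [lazy, hb, hb3]
            rw [hz, zero_mul]
            simp [hb, hb3]
    rw [Finset.sum_congr rfl (fun b _ => hpt b)]
    rw [Finset.sum_add_distrib, sum_ind G hadj]
    simp only [Finset.sum_ite_eq', Finset.mem_univ, if_true]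
  have e2 : ∑ a, lazy G α j a * f a =
      (1 - α) / (G.degree j : ℝ) + ((G.degree j : ℝ) - 1) * (-((1 - α) / (G.degree j : ℝ))) := by
    have hpt : ∀ a, lazy G α j a * f a = (if a = i then (1 - α) / (G.degree j : ℝ) else 0)
        + (if G.Adj j a ∧ a ≠ i then -((1 - α) / (G.degree j : ℝ)) else 0) := by
      intro a
      by_cases ha : a = j
      · rw [ha, hf_j]
        simp [lazy, hJI, fun h : G.Adj j j => (G.irrefl h)]
      · by_cases ha2 : a = i
        · rw [ha2, hf_i]
          simp [lazy, hIJ, hadj.symm]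
        · by_cases ha3 : G.Adj j a
          · rw [hf_l a ha3 ha2]
            simp [lazy, ha, ha2, ha3]
          · have hz : lazy G α j a = 0 := by simp [lazy, ha, ha3]
            rw [hz, zero_mul]
            simp [ha2, ha3]
    rw [Finset.sum_congr rfl (fun a _ => hpt a)]
    rw [Finset.sum_add_distrib, sum_ind G hadj.symm]
    simp only [Finset.sum_ite_eq', Finset.mem_univ, if_true]
  -- lower bound for arbitrary couplings
  have hlb : ∀ c ∈ { c : ℝ | ∃ p : V → V → ℝ, (∀ a b, 0 ≤ p a b) ∧
      (∀ b, ∑ a, p a b = lazy G α i b) ∧ (∀ a, ∑ b, p a b = lazy G α j a) ∧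
      c = ∑ a, ∑ b, p a b * (G.dist a b : ℝ) },
      (2*α - 1) + ((G.degree i : ℝ) - 1) * (2 * ((1 - α) / (G.degree i : ℝ)))
        + ((G.degree j : ℝ) - 1) * (2 * ((1 - α) / (G.degree j : ℝ))) ≤ c := by
    rintro c ⟨p, hpnn, hpcol, hprow, rfl⟩
    have hterm : ∀ a b, p a b * (f b - f a) ≤ p a b * (G.dist a b : ℝ) := by
      intro a b
      rcases eq_or_lt_of_le (hpnn a b) with h0 | hpos
      · rw [← h0]; simp
      · apply mul_le_mul_of_nonneg_left _ hpos.le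
        apply hfbd
        · have hμb : 0 < lazy G α i b := by
            rw [← hpcol b]
            calc (0:ℝ) < p a b := hpos
              _ ≤ ∑ a', p a' b :=
                Finset.single_le_sum (fun x _ => hpnn x b) (Finset.mem_univ a)
          by_contra hcon
          push_neg at hcon
          have : lazy G α i b = 0 := by simp [lazy, hcon.1, hcon.2]
          linarith
        · have hνa : 0 < lazy G α j a := by
            rw [← hprow a]
            calc (0:ℝ) < p a b := hpos
              _ ≤ ∑ b', p a b' :=
                Finset.single_le_sum (fun x _ => hpnn a x) (Finset.mem_univ b)
          by_contra hcon
          push_neg at hcon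
          have : lazy G α j a = 0 := by simp [lazy, hcon.1, hcon.2]
          linarith
    have step1 : ∑ a, ∑ b, p a b * (f b - f a) ≤ ∑ a, ∑ b, p a b * (G.dist a b : ℝ) :=
      Finset.sum_le_sum (fun a _ => Finset.sum_le_sum (fun b _ => hterm a b))
    have step2 : ∑ a, ∑ b, p a b * (f b - f a)
        = (∑ b, lazy G α i b * f b) - (∑ a, lazy G α j a * f a) := by
      have expand : ∀ a, ∑ b, p a b * (f b - f a)
          = (∑ b, p a b * f b) - (∑ b, p a b) * f a := by
        intro a
        rw [Finset.sum_mul, ← Finset.sum_sub_distrib]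
        exact Finset.sum_congr rfl (fun b _ => by ring)
      rw [Finset.sum_congr rfl (fun a _ => expand a), Finset.sum_sub_distrib]
      congr 1
      · rw [Finset.sum_comm]
        exact Finset.sum_congr rfl (fun b _ => by rw [← Finset.sum_mul, hpcol b])
      · exact Finset.sum_congr rfl (fun a _ => by rw [hprow a])
    rw [step2, e1, e2] at step1
    calc (2*α - 1) + ((G.degree i : ℝ) - 1) * (2 * ((1 - α) / (G.degree i : ℝ)))
          + ((G.degree j : ℝ) - 1) * (2 * ((1 - α) / (G.degree j : ℝ)))
        = (α + ((G.degree i : ℝ) - 1) * (2 * ((1 - α) / (G.degree i : ℝ))))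
          - ((1 - α) / (G.degree j : ℝ)
            + ((G.degree j : ℝ) - 1) * (-((1 - α) / (G.degree j : ℝ)))) := by
          linear_combination hDj
      _ ≤ ∑ a, ∑ b, p a b * (G.dist a b : ℝ) := step1
  -- conclude
  have hmem : (2*α - 1) + ((G.degree i : ℝ) - 1) * (2 * ((1 - α) / (G.degree i : ℝ)))
      + ((G.degree j : ℝ) - 1) * (2 * ((1 - α) / (G.degree j : ℝ))) ∈
      { c : ℝ | ∃ p : V → V → ℝ, (∀ a b, 0 ≤ p a b) ∧
        (∀ b, ∑ a, p a b = lazy G α i b) ∧ (∀ a, ∑ b, p a b = lazy G α j a) ∧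
        c = ∑ a, ∑ b, p a b * (G.dist a b : ℝ) } :=
    ⟨π, hπnn, hcol, hrow, hcost.symm⟩
  have hW : W1 G (lazy G α i) (lazy G α j) =
      (2*α - 1) + ((G.degree i : ℝ) - 1) * (2 * ((1 - α) / (G.degree i : ℝ)))
        + ((G.degree j : ℝ) - 1) * (2 * ((1 - α) / (G.degree j : ℝ))) := by
    rw [W1]
    exact le_antisymm (csInf_le ⟨_, hlb⟩ hmem) (le_csInf ⟨_, hmem⟩ hlb)
  rw [hW]
  field_simp
  ring
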